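/- Let x_1, ..., x_n ∈ ℝ^p with n ≥ 3, let w_{ij} = 1 for all pairs i ≠ j (unit affinities), and let E = Σ_{i=1}^n ‖x_i − x̄‖² where x̄ = (1/n) Σ_{i=1}^n x_i. Then for every γ ≥ 8√E/n, every minimizer u = (u_1, ..., u_n) of the convex clustering energy E_γ satisfies u_1 = u_2 = ⋯ = u_n = x̄. -/

import Mathlib

open Finset

open RealInnerProductSpace

/-- The convex clustering energy
`E_γ(u) = ∑ᵢ ‖xᵢ − uᵢ‖² + γ ∑_{i<j} w i j ‖uᵢ − uⱼ‖`. -/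
noncomputable def clusterEnergy {p n : ℕ} (x : Fin n → EuclideanSpace ℝ (Fin p))
    (w : Fin n → Fin n → ℝ) (γ : ℝ) (u : Fin n → EuclideanSpace ℝ (Fin p)) : ℝ :=
  ∑ i, ‖x i - u i‖ ^ 2 +
    γ * ∑ i, ∑ j ∈ univ.filter (fun j => i < j), w i j * ‖u i - u j‖

/-- A symmetric, diagonal-zero double sum over pairs `i < j` is half the full double sum. -/
lemma double_sum_lt {n : ℕ} (f : Fin n → Fin n → ℝ)
    (hsymm : ∀ i j, f i j = f j i) (hdiag : ∀ i, f i i = 0) :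
    2 * ∑ i, ∑ j ∈ univ.filter (fun j => i < j), f i j = ∑ i, ∑ j, f i j := by
  have hpt : ∀ i j : Fin n, f i j =
      (if i < j then f i j else 0) + (if j < i then f i j else 0) := by
    intro i j
    rcases lt_trichotomy i j with h | h | h
    · simp [h, not_lt_of_gt h]
    · simp [h, hdiag]
    · simp [h, not_lt_of_gt h]
  have h1 : ∑ i, ∑ j ∈ univ.filter (fun j => i < j), f i j
      = ∑ i : Fin n, ∑ j : Fin n, (if i < j then f i j else 0) := by
    simp [Finset.sum_filter]
  have h2 : ∑ i : Fin n, ∑ j : Fin n, (if j < i then f i j else 0)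
      = ∑ i : Fin n, ∑ j : Fin n, (if i < j then f i j else 0) := by
    rw [Finset.sum_comm]
    exact Finset.sum_congr rfl fun i _ => Finset.sum_congr rfl fun j _ => by
      rw [hsymm]
  symm
  calc ∑ i : Fin n, ∑ j : Fin n, f i j
      = ∑ i : Fin n, ∑ j : Fin n, ((if i < j then f i j else 0) + (if j < i then f i j else 0)) :=
        Finset.sum_congr rfl fun i _ => Finset.sum_congr rfl fun j _ => hpt i j
    _ = 2 * ∑ i, ∑ j ∈ univ.filter (fun j => i < j), f i j := by
        simp only [Finset.sum_add_distrib, h2, ← h1]; ring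

/-- Parallelogram-type identity for the squared distance to a midpoint. -/
lemma midpoint_sq {p : ℕ} (X a b : EuclideanSpace ℝ (Fin p)) :
    ‖X - (2:ℝ)⁻¹ • (a + b)‖^2 = (‖X - a‖^2 + ‖X - b‖^2)/2 - ‖a - b‖^2/4 := by
  have h := norm_add_sq_real ((2:ℝ)⁻¹ • (X - a)) ((2:ℝ)⁻¹ • (X - b))
  have h' := norm_sub_sq_real ((2:ℝ)⁻¹ • (X - a)) ((2:ℝ)⁻¹ • (X - b))
  have e1 : (2:ℝ)⁻¹ • (X - a) + (2:ℝ)⁻¹ • (X - b) = X - (2:ℝ)⁻¹ • (a + b) := by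
    module
  have e2 : (2:ℝ)⁻¹ • (X - a) - (2:ℝ)⁻¹ • (X - b) = (2:ℝ)⁻¹ • (b - a) := by
    module
  rw [e1] at h; rw [e2] at h'
  have n1 : ‖(2:ℝ)⁻¹ • (X - a)‖ = 2⁻¹ * ‖X - a‖ := by rw [norm_smul]; simp
  have n2 : ‖(2:ℝ)⁻¹ • (X - b)‖ = 2⁻¹ * ‖X - b‖ := by rw [norm_smul]; simp
  have n3 : ‖(2:ℝ)⁻¹ • (b - a)‖ = 2⁻¹ * ‖a - b‖ := by
    rw [norm_smul, norm_sub_rev]; simp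
  rw [n1, n2] at h; rw [n1, n2, n3] at h'
  nlinarith [h, h']

set_option maxHeartbeats 1000000 in
/-- When `γ ≥ 8√E/n`, the constant configuration at the grand mean minimizes the
convex clustering energy with unit affinities. -/
lemma mean_is_min {p n : ℕ} (hn : 1 ≤ n) (x : Fin n → EuclideanSpace ℝ (Fin p)) (γ : ℝ)
    (hγ : 8 * Real.sqrt (∑ i, ‖x i - (n : ℝ)⁻¹ • ∑ k, x k‖ ^ 2) / (n : ℝ) ≤ γ)
    (v : Fin n → EuclideanSpace ℝ (Fin p)) :
    clusterEnergy x (fun _ _ => 1) γ (fun _ => (n : ℝ)⁻¹ • ∑ k, x k)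
      ≤ clusterEnergy x (fun _ _ => 1) γ v := by
  have hn0 : (0:ℝ) < n := by exact_mod_cast hn
  have hnne : (n:ℝ) ≠ 0 := ne_of_gt hn0
  set c : EuclideanSpace ℝ (Fin p) := (n:ℝ)⁻¹ • ∑ k, x k with hc
  set d : Fin n → EuclideanSpace ℝ (Fin p) := fun i => v i - c with hd
  set db : EuclideanSpace ℝ (Fin p) := (n:ℝ)⁻¹ • ∑ k, d k with hdb
  set Ev : ℝ := ∑ i, ‖x i - c‖ ^ 2 with hEv
  set s := Real.sqrt Ev with hs
  have hsnn : 0 ≤ s := Real.sqrt_nonneg _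
  have hL : clusterEnergy x (fun _ _ => 1) γ (fun _ => c) = Ev := by
    simp [clusterEnergy, hEv]
  have hsum0 : ∑ i, (x i - c) = 0 := by
    rw [Finset.sum_sub_distrib, Finset.sum_const, Finset.card_univ, Fintype.card_fin,
      hc, ← Nat.cast_smul_eq_nsmul ℝ, smul_smul, mul_inv_cancel₀ hnne, one_smul, sub_self]
  have hsum0' : ∀ y : EuclideanSpace ℝ (Fin p), ∑ i, ⟪x i - c, y⟫ = (0:ℝ) := by
    intro y; rw [← sum_inner, hsum0, inner_zero_left]
  have expand : ∑ i, ‖x i - v i‖^2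
      = Ev - 2 * ∑ i, ⟪x i - c, d i⟫ + ∑ i, ‖d i‖^2 := by
    have hpt : ∀ i, ‖x i - v i‖^2 = ‖x i - c‖^2 - 2*⟪x i - c, d i⟫ + ‖d i‖^2 := by
      intro i
      have e : x i - v i = (x i - c) - d i := by rw [hd]; beta_reduce; abel
      rw [e, norm_sub_sq_real]
    rw [Finset.sum_congr rfl fun i _ => hpt i, Finset.sum_add_distrib,
      Finset.sum_sub_distrib, ← Finset.mul_sum, hEv]
  have hinner : ∑ i, ⟪x i - c, d i⟫ = ∑ i, ⟪x i - c, d i - db⟫ := by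
    have h0 := hsum0' db
    simp only [inner_sub_right, Finset.sum_sub_distrib, h0, sub_zero]
  have hxb : ∀ i, ‖x i - c‖ ≤ s := by
    intro i
    have h1 : ‖x i - c‖^2 ≤ Ev := by
      rw [hEv]
      exact Finset.single_le_sum (f := fun i => ‖x i - c‖^2) (fun i _ => by positivity)
        (Finset.mem_univ i)
    calc ‖x i - c‖ = Real.sqrt (‖x i - c‖^2) := by
          rw [Real.sqrt_sq (norm_nonneg _)]
      _ ≤ s := Real.sqrt_le_sqrt h1
  have hcs : ∀ i, ⟪x i - c, d i - db⟫ ≤ s * ‖d i - db‖ := fun i =>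
    le_trans (real_inner_le_norm _ _) (mul_le_mul_of_nonneg_right (hxb i) (norm_nonneg _))
  have hmd : ∀ i, (n:ℝ) * ‖d i - db‖ ≤ ∑ j, ‖d i - d j‖ := by
    intro i
    have e : (n:ℝ) • (d i - db) = ∑ j, (d i - d j) := by
      rw [Finset.sum_sub_distrib, Finset.sum_const, Finset.card_univ, Fintype.card_fin,
        ← Nat.cast_smul_eq_nsmul ℝ (n := n) (b := d i), hdb, smul_sub, smul_smul,
        mul_inv_cancel₀ hnne, one_smul]
    calc (n:ℝ) * ‖d i - db‖ = ‖(n:ℝ) • (d i - db)‖ := by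
          rw [norm_smul, Real.norm_eq_abs, abs_of_nonneg hn0.le]
      _ = ‖∑ j, (d i - d j)‖ := by rw [e]
      _ ≤ ∑ j, ‖d i - d j‖ := norm_sum_le _ _
  set P := ∑ i, ∑ j ∈ univ.filter (fun j => i < j), (1:ℝ) * ‖v i - v j‖ with hP
  have hvd : ∀ i j : Fin n, v i - v j = d i - d j := by intro i j; rw [hd]; beta_reduce; abel
  have hP2 : 2 * P = ∑ i, ∑ j, ‖d i - d j‖ := by
    rw [hP]
    simp only [one_mul, hvd]
    exact double_sum_lt (fun i j => ‖d i - d j‖) (fun i j => norm_sub_rev _ _) (by simp)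
  set D := ∑ i, ‖d i - db‖ with hD
  have hDnn : 0 ≤ D := Finset.sum_nonneg fun i _ => norm_nonneg _
  have hPge : (n:ℝ) * D ≤ 2 * P := by
    rw [hP2, hD, Finset.mul_sum]
    exact Finset.sum_le_sum fun i _ => hmd i
  have hPnn : 0 ≤ P := by nlinarith
  have hγnn : 0 ≤ γ := le_trans (by positivity) hγ
  have key : 4 * s * D ≤ γ * P := by
    have h1 : (8*s/n) * P ≤ γ * P := mul_le_mul_of_nonneg_right hγ hPnn
    have h2 : (8*s/n) * ((n:ℝ)*D/2) ≤ (8*s/n) * P := by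
      apply mul_le_mul_of_nonneg_left _ (by positivity)
      linarith
    have h3 : (8*s/n) * ((n:ℝ)*D/2) = 4*s*D := by field_simp; ring
    linarith
  have hI : ∑ i, ⟪x i - c, d i - db⟫ ≤ s * D := by
    rw [hD, Finset.mul_sum]; exact Finset.sum_le_sum fun i _ => hcs i
  have hQ : (0:ℝ) ≤ ∑ i, ‖d i‖^2 := by positivity
  have hR : clusterEnergy x (fun _ _ => 1) γ v
      = Ev - 2 * ∑ i, ⟪x i - c, d i - db⟫ + ∑ i, ‖d i‖^2 + γ * P := by
    rw [clusterEnergy, expand, hinner]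
  rw [hL, hR]
  nlinarith [mul_nonneg hsnn hDnn]

/-- With unit affinities (`w i j = 1` for all `i ≠ j`) and `n ≥ 3` data points,
for every `γ ≥ 8√E/n`, where `E = ∑ᵢ ‖xᵢ − x̄‖²`, every minimizer of the convex
clustering energy has all of its centroids fused at the grand mean `x̄`. -/
theorem unit_affinities_fuse_at_mean {p n : ℕ} (hn : 3 ≤ n)
    (x : Fin n → EuclideanSpace ℝ (Fin p))
    (γ : ℝ)
    (hγ : 8 * Real.sqrt (∑ i, ‖x i - (n : ℝ)⁻¹ • ∑ k, x k‖ ^ 2) / (n : ℝ) ≤ γ)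
    (u : Fin n → EuclideanSpace ℝ (Fin p))
    (hmin : ∀ u' : Fin n → EuclideanSpace ℝ (Fin p),
      clusterEnergy x (fun _ _ => 1) γ u ≤ clusterEnergy x (fun _ _ => 1) γ u') :
    ∀ i, u i = (n : ℝ)⁻¹ • ∑ k, x k := by
  have hn1 : 1 ≤ n := le_trans (by norm_num) hn
  set c : EuclideanSpace ℝ (Fin p) := (n:ℝ)⁻¹ • ∑ k, x k with hc
  set m : Fin n → EuclideanSpace ℝ (Fin p) := fun i => (2:ℝ)⁻¹ • (u i + c) with hm
  have h1 : clusterEnergy x (fun _ _ => 1) γ u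
      ≤ clusterEnergy x (fun _ _ => 1) γ (fun _ => c) := hmin _
  have h2 : clusterEnergy x (fun _ _ => 1) γ (fun _ => c)
      ≤ clusterEnergy x (fun _ _ => 1) γ m := mean_is_min hn1 x γ hγ m
  have h3 : clusterEnergy x (fun _ _ => 1) γ (fun _ => c)
      ≤ clusterEnergy x (fun _ _ => 1) γ u := mean_is_min hn1 x γ hγ u
  have hquad : ∑ i, ‖x i - m i‖^2
      = (∑ i, ‖x i - u i‖^2 + ∑ i, ‖x i - c‖^2)/2 - (∑ i, ‖u i - c‖^2)/4 := by
    have hpt : ∀ i, ‖x i - m i‖^2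
        = (‖x i - u i‖^2 + ‖x i - c‖^2)/2 - ‖u i - c‖^2/4 := fun i => midpoint_sq _ _ _
    rw [Finset.sum_congr rfl fun i _ => hpt i, Finset.sum_sub_distrib]
    rw [← Finset.sum_div, ← Finset.sum_div, Finset.sum_add_distrib]
  have hpen : ∀ i j : Fin n, ‖m i - m j‖ = 2⁻¹ * ‖u i - u j‖ := by
    intro i j
    have e : m i - m j = (2:ℝ)⁻¹ • (u i - u j) := by rw [hm]; module
    rw [e, norm_smul]; simp
  have hpen2 : ∑ i, ∑ j ∈ univ.filter (fun j => i < j), (1:ℝ) * ‖m i - m j‖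
      = 2⁻¹ * ∑ i, ∑ j ∈ univ.filter (fun j => i < j), (1:ℝ) * ‖u i - u j‖ := by
    rw [Finset.mul_sum]
    refine Finset.sum_congr rfl fun i _ => ?_
    rw [Finset.mul_sum]
    exact Finset.sum_congr rfl fun j _ => by rw [hpen]; ring
  have hmid : clusterEnergy x (fun _ _ => 1) γ m
      = (clusterEnergy x (fun _ _ => 1) γ u + clusterEnergy x (fun _ _ => 1) γ (fun _ => c))/2
        - (∑ i, ‖u i - c‖^2)/4 := by
    have hcE : clusterEnergy x (fun _ _ => 1) γ (fun _ => c) = ∑ i, ‖x i - c‖^2 := by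
      simp [clusterEnergy]
    rw [clusterEnergy, hquad, hpen2, hcE, clusterEnergy]
    ring
  have hzero : ∑ i, ‖u i - c‖^2 ≤ 0 := by linarith
  have hz : ∀ i ∈ (univ : Finset (Fin n)), ‖u i - c‖^2 = 0 := by
    intro i _
    have hnn : ∀ i ∈ (univ : Finset (Fin n)), (0:ℝ) ≤ ‖u i - c‖^2 := fun i _ => by positivity
    have := (Finset.sum_eq_zero_iff_of_nonneg hnn).mp (le_antisymm hzero (Finset.sum_nonneg hnn))
    exact this i (Finset.mem_univ i)
  intro i
  have := hz i (Finset.mem_univ i)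
  have h4 : ‖u i - c‖ = 0 := by
    nlinarith [norm_nonneg (u i - c), this]
  have := norm_eq_zero.mp h4
  exact sub_eq_zero.mp this
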